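/- Let C ⊆ ℝⁿ be a nonempty compact β-strongly convex set (β > 0), let x ∈ C, let U ⊆ ℝⁿ be a linear subspace with orthogonal projection Π, and let g ∈ ℝⁿ with Πg ≠ 0. Let s be a minimizer of y ↦ ⟨g, y⟩ over C ∩ (x + U), and set d := s − x. Then ⟨g, x − s⟩ ≥ (β/4)·‖Πg‖·‖d‖², and ‖d‖ ≤ 4/β. -/

import Mathlib

/-- A set `C` is `β`-strongly convex if for all `x, y ∈ C` and `λ ∈ [0,1]`, the
closed ball of center `λx + (1−λ)y` and radius `β λ(1−λ) ‖x−y‖²` is contained in `C`. -/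
def StronglyConvexSet {n : ℕ} (β : ℝ) (C : Set (EuclideanSpace ℝ (Fin n))) : Prop :=
  ∀ x ∈ C, ∀ y ∈ C, ∀ l ∈ Set.Icc (0 : ℝ) 1,
    Metric.closedBall (l • x + (1 - l) • y) (β * (l * (1 - l)) * ‖x - y‖ ^ 2) ⊆ C

/-- Scaling inequality in the subspace: if `C` is nonempty, compact and
`β`-strongly convex, `x ∈ C`, `U` a linear subspace with orthogonal projection
`Π` and `Πg ≠ 0`, and `s` minimizes `y ↦ ⟨g,y⟩` over the section `C ∩ (x + U)`,
then with `d = s − x`, `⟨g, x − s⟩ ≥ (β/4) ‖Πg‖ ‖d‖²` and `‖d‖ ≤ 4/β`. -/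
theorem subspace_scaling_inequality {n : ℕ} (β : ℝ) (hβ : 0 < β)
    (C : Set (EuclideanSpace ℝ (Fin n))) (hne : C.Nonempty) (hcomp : IsCompact C)
    (hC : StronglyConvexSet β C)
    (x : EuclideanSpace ℝ (Fin n)) (hx : x ∈ C)
    (U : Submodule ℝ (EuclideanSpace ℝ (Fin n)))
    (g : EuclideanSpace ℝ (Fin n))
    (hg : (U.orthogonalProjectionOnto g : EuclideanSpace ℝ (Fin n)) ≠ 0)
    (s : EuclideanSpace ℝ (Fin n)) (hsC : s ∈ C) (hsU : s - x ∈ U)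
    (hmin : ∀ y ∈ C, y - x ∈ U → (inner ℝ g s : ℝ) ≤ inner ℝ g y) :
    β / 4 * ‖(U.orthogonalProjectionOnto g : EuclideanSpace ℝ (Fin n))‖ * ‖s - x‖ ^ 2 ≤
        (inner ℝ g (x - s) : ℝ) ∧
      ‖s - x‖ ≤ 4 / β := by
  set p : EuclideanSpace ℝ (Fin n) := (U.orthogonalProjectionOnto g : EuclideanSpace ℝ (Fin n)) with hp
  have hpU : p ∈ U := (U.orthogonalProjectionOnto g).2
  have hpnorm : 0 < ‖p‖ := norm_pos_iff.mpr hg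
  have hinner : ∀ u ∈ U, (inner ℝ g u : ℝ) = inner ℝ p u := by
    intro u hu
    have h0 : (inner ℝ (g - p) u : ℝ) = 0 := U.starProjection_inner_eq_zero g u hu
    rw [inner_sub_left] at h0
    linarith [h0]
  set c : ℝ := β / 4 * ‖s - x‖ ^ 2 / ‖p‖ with hc
  have hc0 : 0 ≤ c := by positivity
  set y : EuclideanSpace ℝ (Fin n) :=
    ((1/2 : ℝ) • s + (1 - 1/2 : ℝ) • x) - c • p with hy
  have hyC : y ∈ C := by
    apply hC s hsC x hx (1/2) ⟨by norm_num, by norm_num⟩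
    rw [Metric.mem_closedBall]
    have hdist : dist y ((1/2 : ℝ) • s + (1 - 1/2 : ℝ) • x) = c * ‖p‖ := by
      rw [dist_eq_norm, hy]
      simp [norm_smul, abs_of_nonneg hc0]
    rw [hdist, hc]
    have : β / 4 * ‖s - x‖ ^ 2 / ‖p‖ * ‖p‖ = β / 4 * ‖s - x‖ ^ 2 := by
      field_simp
    rw [this]
    nlinarith [sq_nonneg ‖s - x‖]
  have hyU : y - x ∈ U := by
    have hrw : y - x = (1/2 : ℝ) • (s - x) - c • p := by
      rw [hy]; module
    rw [hrw]
    exact U.sub_mem (U.smul_mem _ hsU) (U.smul_mem _ hpU)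
  have hle := hmin y hyC hyU
  have hgy : (inner ℝ g y : ℝ) =
      (1/2 : ℝ) * inner ℝ g s + (1/2 : ℝ) * inner ℝ g x - c * inner ℝ g p := by
    rw [hy, inner_sub_right, inner_add_right, real_inner_smul_right,
      real_inner_smul_right, real_inner_smul_right]
    ring
  have hgp : (inner ℝ g p : ℝ) = ‖p‖ ^ 2 := by
    rw [hinner p hpU, real_inner_self_eq_norm_sq]
  have hcp : c * ‖p‖ ^ 2 = β / 4 * ‖s - x‖ ^ 2 * ‖p‖ := by
    rw [hc]; field_simp
  have hkey : β / 2 * ‖p‖ * ‖s - x‖ ^ 2 ≤ (inner ℝ g (x - s) : ℝ) := by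
    rw [inner_sub_right]
    rw [hgy, hgp] at hle
    nlinarith [hle, hcp]
  constructor
  · have : β / 4 * ‖p‖ * ‖s - x‖ ^ 2 ≤ β / 2 * ‖p‖ * ‖s - x‖ ^ 2 := by
      nlinarith [sq_nonneg ‖s - x‖, hpnorm.le]
    linarith
  · have hcs : (inner ℝ g (x - s) : ℝ) ≤ ‖p‖ * ‖s - x‖ := by
      have hxs : x - s = -(s - x) := by abel
      have h1 : (inner ℝ g (x - s) : ℝ) = inner ℝ p (x - s) := by
        rw [hinner (x - s) (by rw [hxs]; exact U.neg_mem hsU)]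
      rw [h1]
      calc (inner ℝ p (x - s) : ℝ) ≤ ‖p‖ * ‖x - s‖ := real_inner_le_norm p (x - s)
        _ = ‖p‖ * ‖s - x‖ := by rw [norm_sub_rev]
    have h2 : β / 2 * ‖s - x‖ ^ 2 ≤ ‖s - x‖ := by
      nlinarith [hkey, hcs, hpnorm]
    rw [le_div_iff₀ hβ]
    nlinarith [norm_nonneg (s - x), h2]
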